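/- If G is a graph with d(G) = δ(G) + 1 (domatically full) and H is a graph with minimum degree 1, then d_t(G □ H) = d(G). -/

import Mathlib

open SimpleGraph Finset

/-- A domatic `k`-coloring: every vertex sees all `k` colors in its closed neighborhood. -/
def IsDomaticColoring {V : Type*} (G : SimpleGraph V) (k : ℕ) (f : V → Fin k) : Prop :=
  ∀ v : V, ∀ c : Fin k, ∃ u : V, (u = v ∨ G.Adj v u) ∧ f u = c

/-- A total domatic `k`-coloring: every vertex sees all `k` colors in its open neighborhood. -/
def IsTotalDomaticColoring {V : Type*} (G : SimpleGraph V) (k : ℕ) (f : V → Fin k) : Prop :=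
  ∀ v : V, ∀ c : Fin k, ∃ u : V, G.Adj v u ∧ f u = c

/-- The domatic number `d(G)`. -/
noncomputable def domaticNumber {V : Type*} (G : SimpleGraph V) : ℕ :=
  sSup {k | ∃ f : V → Fin k, IsDomaticColoring G k f}

/-- The total domatic number `d_t(G)`. -/
noncomputable def totalDomaticNumber {V : Type*} (G : SimpleGraph V) : ℕ :=
  sSup {k | ∃ f : V → Fin k, IsTotalDomaticColoring G k f}

def IsDominatingSet {V : Type*} (G : SimpleGraph V) (D : Set V) : Prop :=
  ∀ v : V, v ∈ D ∨ ∃ u ∈ D, G.Adj v u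

def IsTotalDominatingSet {V : Type*} (G : SimpleGraph V) (D : Set V) : Prop :=
  ∀ v : V, ∃ u ∈ D, G.Adj v u

noncomputable def dominationNumber {V : Type*} (G : SimpleGraph V) [Fintype V] : ℕ :=
  sInf {n | ∃ D : Finset V, D.card = n ∧ IsDominatingSet G ↑D}

noncomputable def totalDominationNumber {V : Type*} (G : SimpleGraph V) [Fintype V] : ℕ :=
  sInf {n | ∃ D : Finset V, D.card = n ∧ IsTotalDominatingSet G ↑D}

/-- An injective `k`-coloring: vertices with a common neighbor get distinct colors. -/
def IsInjectiveColoring {V : Type*} (G : SimpleGraph V) (k : ℕ) (f : V → Fin k) : Prop :=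
  ∀ u w v : V, G.Adj v u → G.Adj v w → u ≠ w → f u ≠ f w

noncomputable def injChromaticNumber {V : Type*} (G : SimpleGraph V) : ℕ :=
  sInf {k | ∃ f : V → Fin k, IsInjectiveColoring G k f}

def NoIsolated {V : Type*} (G : SimpleGraph V) : Prop := ∀ v : V, ∃ u, G.Adj v u

/-- The Hamming graph `H(n,q)`: vertices differ in exactly one coordinate. -/
def hammingGraph (n q : ℕ) : SimpleGraph (Fin n → Fin q) :=
  SimpleGraph.fromRel (fun x y => ∃ i, x i ≠ y i ∧ ∀ j, j ≠ i → x j = y j)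

/-- The hypercube `Q n`. -/
def hypercube (n : ℕ) : SimpleGraph (Fin n → Fin 2) := hammingGraph n 2

/-- The torus `C_{k 0} □ ⋯ □ C_{k (d-1)}`. -/
def torusGraph (d : ℕ) (k : Fin d → ℕ) : SimpleGraph (∀ i : Fin d, ZMod (k i)) :=
  SimpleGraph.fromRel (fun x y => ∃ i, x i = y i + 1 ∧ ∀ j, j ≠ i → x j = y j)

theorem totalDomatic_boxProd_of_domatically_full {V W : Type*} [Fintype V] [Fintype W]
    (G : SimpleGraph V) (H : SimpleGraph W) [DecidableRel G.Adj] [DecidableRel H.Adj]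
    (hG : NoIsolated G) (hH : NoIsolated H)
    (hfull : domaticNumber G = G.minDegree + 1) (hdel : H.minDegree = 1) :
    totalDomaticNumber (G □ H) = domaticNumber G := by
  classical
  set SG := {k | ∃ f : V → Fin k, IsDomaticColoring G k f} with hSG
  set SB := {k | ∃ f : V × W → Fin k, IsTotalDomaticColoring (G □ H) k f} with hSB
  -- W is nonempty
  have hW : Nonempty W := by
    by_contra h
    rw [not_nonempty_iff] at h
    rw [SimpleGraph.minDegree, Finset.univ_eq_empty] at hdel
    simp at hdel
  -- V is nonempty
  have hV : Nonempty V := by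
    by_contra h
    rw [not_nonempty_iff] at h
    have hall : ∀ k : ℕ, k ∈ SG := by
      intro k
      exact ⟨fun v => isEmptyElim v, fun v => isEmptyElim v⟩
    have : ¬ BddAbove SG := by
      rintro ⟨b, hb⟩
      exact absurd (hb (hall (b + 1))) (by omega)
    have h0 : domaticNumber G = 0 := by
      rw [domaticNumber, csSup_of_not_bddAbove this, csSup_empty]
      rfl
    rw [h0] at hfull
    omega
  -- bound for domatic colorings of G
  have hboundG : ∀ k ∈ SG, k ≤ G.minDegree + 1 := by
    intro k hk
    obtain ⟨v, hv⟩ := G.exists_minimal_degree_vertex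
    obtain ⟨f, hf⟩ := hk
    choose u hu1 hu2 using hf v
    have hinj : Function.Injective u := fun a b hab => by
      rw [← hu2 a, ← hu2 b, hab]
    have hmem : ∀ c, u c ∈ insert v (G.neighborFinset v) := by
      intro c
      rcases hu1 c with h | h
      · simp [h]
      · simp [Finset.mem_insert, SimpleGraph.mem_neighborFinset, h]
    have hcard := Finset.card_le_card_of_injOn (s := Finset.univ) u (fun c _ => hmem c)
      (fun a _ b _ hab => hinj hab)
    have : (insert v (G.neighborFinset v)).card ≤ G.degree v + 1 :=
      Finset.card_insert_le _ _
    simp only [Finset.card_univ, Fintype.card_fin] at hcard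
    omega
  -- the domatic number is attained
  have hGmem : domaticNumber G ∈ SG := by
    apply Nat.sSup_mem
    · exact ⟨1, fun _ => 0, fun v c => ⟨v, Or.inl rfl, Subsingleton.elim _ _⟩⟩
    · exact ⟨G.minDegree + 1, hboundG⟩
  -- lower bound: a domatic coloring of G gives a total domatic coloring of G □ H
  have hBmem : domaticNumber G ∈ SB := by
    obtain ⟨f, hf⟩ := hGmem
    refine ⟨fun p => f p.1, ?_⟩
    rintro ⟨v, w⟩ c
    obtain ⟨u, huv, huc⟩ := hf v c
    rcases huv with rfl | hadj
    · obtain ⟨x, hx⟩ := hH w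
      exact ⟨(u, x), SimpleGraph.boxProd_adj.mpr (Or.inr ⟨hx, rfl⟩), huc⟩
    · exact ⟨(u, w), SimpleGraph.boxProd_adj.mpr (Or.inl ⟨hadj, rfl⟩), huc⟩
  -- upper bound for total domatic colorings of G □ H
  have hboundB : ∀ k ∈ SB, k ≤ G.minDegree + 1 := by
    intro k hk
    obtain ⟨v, hv⟩ := G.exists_minimal_degree_vertex
    obtain ⟨w, hw⟩ := H.exists_minimal_degree_vertex
    obtain ⟨f, hf⟩ := hk
    choose u hu1 hu2 using hf (v, w)
    have hinj : Function.Injective u := fun a b hab => by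
      rw [← hu2 a, ← hu2 b, hab]
    have hcard := Finset.card_le_card_of_injOn (s := Finset.univ) u
      (fun c _ => (SimpleGraph.mem_neighborFinset _ _ _).mpr (hu1 c))
      (fun a _ b _ hab => hinj hab)
    simp only [Finset.card_univ, Fintype.card_fin] at hcard
    have hdeg : ((G □ H)).degree (v, w) = G.degree v + H.degree w :=
      SimpleGraph.degree_boxProd (v, w)
    rw [SimpleGraph.degree] at hdeg
    rw [hdeg, ← hv, ← hw, hdel] at hcard
    exact hcard
  -- conclude
  rw [hfull]
  apply le_antisymm
  · exact csSup_le ⟨domaticNumber G, hBmem⟩ (fun k hk => hboundB k hk)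
  · rw [← hfull]
    exact le_csSup ⟨G.minDegree + 1, hboundB⟩ hBmem
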